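/- Let $G$ be a group and $H$ a group, let $\theta\colon G \to H$ be a function and $\zeta\colon G \to \mathbb{T}$ (the circle group in $\mathbb{C}$) a function such that for all $s,t \in G$ the equality of formal measures $\zeta(s)\zeta(t)(\delta_{\theta(s)\theta(t)} + \delta_{\theta(t)\theta(s)}) = \zeta(st)\delta_{\theta(st)} + \zeta(ts)\delta_{\theta(ts)}$ holds in the free complex vector space on $H$. Then $\zeta(st)=\zeta(s)\zeta(t)$ for all $s,t$, and $\theta(st) \in \{\theta(s)\theta(t), \theta(t)\theta(s)\}$ for all $s,t$. -/

import Mathlib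

open Finsupp

/-- From `β + γ = 2α` with all of norm 1, conclude `β = α`. -/
lemma aux_norm_eq (α β γ : ℂ) (hα : ‖α‖ = 1) (hβ : ‖β‖ = 1) (hγ : ‖γ‖ = 1)
    (e1 : β + γ = 2 * α) : β = α := by
  have f1 : β * (starRingEnd ℂ) β = 1 := by
    rw [Complex.mul_conj, Complex.normSq_eq_norm_sq, hβ]; norm_num
  have f2 : γ * (starRingEnd ℂ) γ = 1 := by
    rw [Complex.mul_conj, Complex.normSq_eq_norm_sq, hγ]; norm_num
  have f3 : α * (starRingEnd ℂ) α = 1 := by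
    rw [Complex.mul_conj, Complex.normSq_eq_norm_sq, hα]; norm_num
  have e2 : (starRingEnd ℂ) β + (starRingEnd ℂ) γ = 2 * (starRingEnd ℂ) α := by
    have := congrArg (starRingEnd ℂ) e1
    simpa [map_ofNat] using this
  have hsq : (β - α) ^ 2 = 0 := by
    linear_combination (β - α / 2) * e1 + (α * β * γ / 2) * e2 - (α * γ / 2) * f1
      - (α * β / 2) * f2 + β * γ * f3
  have := pow_eq_zero_iff (n := 2) (by norm_num) |>.mp hsq
  exact sub_eq_zero.mp this

open Classical in
/-- The key pointwise case analysis: if `α (δ_a + δ_b) = β δ_c + γ δ_d` pointwise with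
all coefficients of norm one, then `β = α` and `c ∈ {a, b}`. -/
lemma aux_main_cases {X : Type*} (α β γ : ℂ) (a b c d : X)
    (hα : ‖α‖ = 1) (hβ : ‖β‖ = 1) (hγ : ‖γ‖ = 1)
    (k : ∀ x : X, α * ((if a = x then (1:ℂ) else 0) + (if b = x then 1 else 0)) =
      β * (if c = x then 1 else 0) + γ * (if d = x then 1 else 0)) :
    β = α ∧ (c = a ∨ c = b) := by
  have hα0 : α ≠ 0 := by intro h0; rw [h0] at hα; simp at hα
  have hβ0 : β ≠ 0 := by intro h0; rw [h0] at hβ; simp at hβ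
  have hγ0 : γ ≠ 0 := by intro h0; rw [h0] at hγ; simp at hγ
  by_cases hab : a = b
  · by_cases hca : c = a
    · have kc := k a
      rw [if_pos rfl, if_pos hab.symm, if_pos hca] at kc
      by_cases hda : d = a
      · rw [if_pos hda, mul_one, mul_one] at kc
        exact ⟨aux_norm_eq α β γ hα hβ hγ (by linear_combination -kc), Or.inl hca⟩
      · rw [if_neg hda, mul_zero, add_zero, mul_one] at kc
        exfalso
        have h2 : ‖β‖ = 2 := by rw [← kc, norm_mul, hα]; norm_num
        rw [hβ] at h2; norm_num at h2
    · exfalso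
      have ka := k a
      rw [if_pos rfl, if_pos hab.symm, if_neg hca, mul_zero, zero_add] at ka
      by_cases hda : d = a
      · rw [if_pos hda, mul_one] at ka
        have h2 : ‖γ‖ = 2 := by rw [← ka, norm_mul, hα]; norm_num
        rw [hγ] at h2; norm_num at h2
      · rw [if_neg hda, mul_zero] at ka
        exact hα0 (by simpa using ka)
  · by_cases hca : c = a
    · have kb := k b
      rw [if_neg hab, if_pos rfl, if_neg (hca ▸ hab : ¬c = b), mul_zero, zero_add,
        zero_add, mul_one] at kb
      by_cases hdb : d = b
      · have ka := k a
        rw [if_pos rfl, if_neg (fun h => hab (h.symm)), add_zero, mul_one, if_pos hca,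
          mul_one, if_neg (hdb ▸ fun h : d = a => hab (h.symm.trans hdb)), mul_zero,
          add_zero] at ka
        exact ⟨ka.symm, Or.inl hca⟩
      · rw [if_neg hdb, mul_zero] at kb
        exact absurd (by simpa using kb) hα0
    · by_cases hcb : c = b
      · have ka := k a
        rw [if_pos rfl, if_neg (fun h => hab h.symm), add_zero, mul_one, if_neg hca,
          mul_zero, zero_add] at ka
        by_cases hda : d = a
        · have kb := k b
          rw [if_neg hab, if_pos rfl, zero_add, mul_one, if_pos hcb, mul_one,
            if_neg (fun h : d = b => hab (hda.symm.trans h)), mul_zero, add_zero] at kb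
          exact ⟨kb.symm, Or.inr hcb⟩
        · rw [if_neg hda, mul_zero] at ka
          exact absurd (by simpa using ka) hα0
      · exfalso
        have kc := k c
        rw [if_neg (fun h => hca h.symm), if_neg (fun h => hcb h.symm), if_pos rfl,
          mul_one] at kc
        by_cases hdc : d = c
        · rw [if_pos hdc, mul_one] at kc
          have ka := k a
          rw [if_pos rfl, if_neg (fun h => hab h.symm), add_zero, mul_one, if_neg hca,
            mul_zero, zero_add, if_neg (fun h : d = a => hca (hdc.symm.trans h)),
            mul_zero] at ka
          exact hα0 ka
        · rw [if_neg hdc, mul_zero, add_zero] at kc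
          exact hβ0 (by linear_combination -kc)

/-- If `ζ : G → 𝕋` and `θ : G → H` satisfy
`ζ(s)ζ(t)(δ_{θ(s)θ(t)} + δ_{θ(t)θ(s)}) = ζ(st)δ_{θ(st)} + ζ(ts)δ_{θ(ts)}`
in the free complex vector space on `H`, then `ζ` is a homomorphism and `θ` is a
half-homomorphism. -/
theorem stmt_5 {G H : Type*} [Group G] [Group H] (θ : G → H) (ζ : G → ℂ)
    (hζ : ∀ t : G, ‖ζ t‖ = 1)
    (h : ∀ s t : G,
      (ζ s * ζ t) • ((single (θ s * θ t) 1 + single (θ t * θ s) 1 : H →₀ ℂ)) =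
        ζ (s * t) • (single (θ (s * t)) 1 : H →₀ ℂ) +
          ζ (t * s) • (single (θ (t * s)) 1 : H →₀ ℂ)) :
    (∀ s t : G, ζ (s * t) = ζ s * ζ t) ∧
      (∀ s t : G, θ (s * t) = θ s * θ t ∨ θ (s * t) = θ t * θ s) := by
  classical
  have main : ∀ s t : G, ζ (s * t) = ζ s * ζ t ∧
      (θ (s * t) = θ s * θ t ∨ θ (s * t) = θ t * θ s) := by
    intro s t
    refine aux_main_cases (ζ s * ζ t) (ζ (s * t)) (ζ (t * s)) (θ s * θ t) (θ t * θ s)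
      (θ (s * t)) (θ (t * s)) (by rw [norm_mul, hζ, hζ, mul_one]) (hζ _) (hζ _) ?_
    intro x
    have := DFunLike.congr_fun (h s t) x
    simpa only [Finsupp.smul_apply, Finsupp.add_apply, Finsupp.single_apply, smul_eq_mul]
      using this
  exact ⟨fun s t => (main s t).1, fun s t => (main s t).2⟩
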